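/- The restriction of q to U = {(c,z) ∈ S² : c ≠ 0} (the sphere with the two poles removed), viewed as a map U → X, is a local homeomorphism. -/

import Mathlib

noncomputable section

/-- The 2-sphere, realized as the unit sphere `{(c,z) : |c|² + z² = 1}` in `ℂ × ℝ`,
with the subspace topology. -/
def TwoSphere : Set (ℂ × ℝ) := {p | ‖p.1‖ ^ 2 + p.2 ^ 2 = 1}

/-- The relation `r₀` on `S²`: `r₀ (c,z) (c',z')` iff `z ≠ 0`, `c' = -c` and `z' = z`. -/
def sphRel (a b : TwoSphere) : Prop :=
  a.1.2 ≠ 0 ∧ b.1.1 = -a.1.1 ∧ b.1.2 = a.1.2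

/-- The twisted sphere `X`: the quotient of `S²` by the equivalence relation generated
by `r₀`, with the quotient topology. -/
abbrev TwistedSphere : Type := Quot (Relation.EqvGen sphRel)

/-- The quotient map `q : S² → X`. -/
abbrev sphQ : TwoSphere → TwistedSphere := Quot.mk (Relation.EqvGen sphRel)

/-- `U = S² ∖ {poles}`: the points of the sphere whose `ℂ`-coordinate is nonzero. -/
def sphU : Set TwoSphere := {p | p.1.1 ≠ 0}

/-- The explicit equivalence relation that `EqvGen sphRel` turns out to be. -/
def sphEqv (a b : TwoSphere) : Prop :=
  a = b ∨ (a.1.2 ≠ 0 ∧ b.1.1 = -a.1.1 ∧ b.1.2 = a.1.2)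

lemma sphEqv_equivalence : Equivalence sphEqv := by
  constructor
  · intro a; exact Or.inl rfl
  · rintro a b (rfl | ⟨hz, hc, hzz⟩)
    · exact Or.inl rfl
    · exact Or.inr ⟨hzz ▸ hz, by rw [hc, neg_neg], hzz.symm⟩
  · rintro a b c (rfl | ⟨hz, hc, hzz⟩) h2
    · exact h2
    · rcases h2 with rfl | ⟨hz', hc', hzz'⟩
      · exact Or.inr ⟨hz, hc, hzz⟩
      · left
        refine Subtype.ext (Prod.ext ?_ ?_)
        · rw [hc', hc, neg_neg]
        · rw [hzz', hzz]

lemma eqvGen_char {a b : TwoSphere} : Relation.EqvGen sphRel a b ↔ sphEqv a b := by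
  constructor
  · intro h
    have : Relation.EqvGen sphEqv a b :=
      Relation.EqvGen.mono (fun x y h => Or.inr h) _ _ h
    exact sphEqv_equivalence.eqvGen_iff.mp this
  · rintro (rfl | h)
    · exact Relation.EqvGen.refl a
    · exact Relation.EqvGen.rel _ _ h

lemma sphQ_eq_iff {a b : TwoSphere} : sphQ a = sphQ b ↔ sphEqv a b := by
  rw [Quot.eq, (Relation.EqvGen.is_equivalence _).eqvGen_iff, eqvGen_char]

/-- The antipodal-in-`ℂ` involution on the sphere. -/
def sphSigma (p : TwoSphere) : TwoSphere :=
  ⟨(-p.1.1, p.1.2), by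
    have h := p.2
    simp only [TwoSphere, Set.mem_setOf_eq] at h ⊢
    simpa using h⟩

lemma continuous_sphSigma : Continuous sphSigma := by
  apply Continuous.subtype_mk
  exact ((continuous_fst.comp continuous_subtype_val).neg).prodMk
    (continuous_snd.comp continuous_subtype_val)

lemma isOpenMap_sphQ : IsOpenMap sphQ := by
  intro V hV
  rw [isOpen_coinduced]
  have hpre : sphQ ⁻¹' (sphQ '' V)
      = V ∪ (sphSigma ⁻¹' V ∩ {p : TwoSphere | p.1.2 ≠ 0}) := by
    ext p
    simp only [Set.mem_preimage, Set.mem_image, Set.mem_union, Set.mem_inter_iff,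
      Set.mem_setOf_eq]
    constructor
    · rintro ⟨v, hv, hq⟩
      rcases sphQ_eq_iff.mp hq with rfl | ⟨hz, hc, hzz⟩
      · exact Or.inl hv
      · right
        have : sphSigma v = p := by
          refine Subtype.ext (Prod.ext ?_ ?_)
          · simpa [sphSigma] using hc.symm
          · simpa [sphSigma] using hzz.symm
        have hvs : sphSigma p = v := by
          rw [← this]
          refine Subtype.ext (Prod.ext ?_ ?_) <;> simp [sphSigma]
        refine ⟨hvs ▸ hv, ?_⟩
        rw [hzz]
        exact hz
    · rintro (hp | ⟨hs, hz⟩)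
      · exact ⟨p, hp, rfl⟩
      · refine ⟨sphSigma p, hs, ?_⟩
        apply (sphQ_eq_iff).mpr
        refine Or.inr ⟨hz, ?_, rfl⟩
        simp [sphSigma]
  rw [hpre]
  have hz : IsOpen {p : TwoSphere | p.1.2 ≠ 0} :=
    isOpen_ne.preimage (continuous_snd.comp continuous_subtype_val)
  exact hV.union ((hV.preimage continuous_sphSigma).inter hz)

lemma isOpen_sphU : IsOpen sphU :=
  isOpen_ne.preimage (continuous_fst.comp continuous_subtype_val)

theorem stmt_9 :
    IsLocalHomeomorph (fun u : sphU => sphQ u.1) := by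
  rw [isLocalHomeomorph_iff_isOpenEmbedding_restrict]
  intro u
  set c0 : ℂ := u.1.1.1 with hc0
  have hc0ne : c0 ≠ 0 := u.2
  set g : sphU → ℝ := fun p => (p.1.1.1 * (starRingEnd ℂ) c0).re with hg
  have hgc : Continuous g := by
    apply Complex.continuous_re.comp
    exact (continuous_fst.comp (continuous_subtype_val.comp continuous_subtype_val)).mul
      continuous_const
  set O : Set sphU := g ⁻¹' Set.Ioi 0 with hO
  have hOopen : IsOpen O := (isOpen_Ioi).preimage hgc
  have huO : u ∈ O := by
    simp only [hO, Set.mem_preimage, Set.mem_Ioi, hg]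
    rw [Complex.mul_conj]
    simpa using Complex.normSq_pos.mpr hc0ne
  refine ⟨O, hOopen.mem_nhds huO, ?_⟩
  rw [Topology.isOpenEmbedding_iff_continuous_injective_isOpenMap]
  have hfc : Continuous (fun p : sphU => sphQ p.1) :=
    (continuous_quot_mk).comp continuous_subtype_val
  refine ⟨hfc.comp continuous_subtype_val, ?_, ?_⟩
  · -- injectivity on O
    rintro ⟨a, ha⟩ ⟨b, hb⟩ hab
    simp only [Set.restrict_apply] at hab
    rcases sphQ_eq_iff.mp hab with h | ⟨hz, hc, hzz⟩
    · exact Subtype.ext (Subtype.ext h)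
    · exfalso
      simp only [hO, Set.mem_preimage, Set.mem_Ioi, hg] at ha hb
      rw [hc] at hb
      simp only [neg_mul, Complex.neg_re] at hb
      linarith
  · -- open map
    have : (O.domRestrict fun p : sphU => sphQ p.1)
        = (fun p : TwoSphere => sphQ p) ∘ (Subtype.val ∘ Subtype.val) := rfl
    rw [this]
    exact isOpenMap_sphQ.comp
      ((isOpen_sphU.isOpenMap_subtype_val).comp
        ((hOopen).isOpenMap_subtype_val))

end
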